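/- Let u : ℤ × ℝ → ℝ, (n,t) ↦ u_n(t), with each u_n differentiable, be a solution of the reduced YdKN equation: for all n ∈ ℤ and t ∈ ℝ, u_{n+1}(t) ≠ u_{n-1}(t) and u_n'(t) = u_n(t)² u_{n+1}(t) u_{n-1}(t)/(u_{n+1}(t) − u_{n-1}(t)). Let λ ∈ ℝ be such that 1 − λ u_n(t) ≠ 0 for all n ∈ ℤ, t ∈ ℝ. Then v_n(t) := u_n(t)/(1 − λ u_n(t)) is again a solution: for all n and t, v_{n+1}(t) ≠ v_{n-1}(t) and v_n'(t) = v_n(t)² v_{n+1}(t) v_{n-1}(t)/(v_{n+1}(t) − v_{n-1}(t)). -/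

import Mathlib

/-- The symmetry group generated by `X₂ = uₙ²∂_{uₙ}` maps solutions of the reduced YdKN
equation `u̇ₙ = uₙ² uₙ₊₁ uₙ₋₁/(uₙ₊₁ − uₙ₋₁)` to solutions: if `uₙ(t)` is a solution and
`1 − λuₙ(t)` never vanishes, then `vₙ(t) = uₙ(t)/(1 − λuₙ(t))` is again a solution. -/
theorem ydkn_symmetry_X2 (u : ℤ → ℝ → ℝ) (hu : ∀ n, Differentiable ℝ (u n))
    (hsol : ∀ (n : ℤ) (t : ℝ), u (n + 1) t ≠ u (n - 1) t ∧
      deriv (u n) t =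
        (u n t) ^ 2 * u (n + 1) t * u (n - 1) t / (u (n + 1) t - u (n - 1) t))
    (lam : ℝ) (hlam : ∀ (n : ℤ) (t : ℝ), 1 - lam * u n t ≠ 0) :
    ∀ (n : ℤ) (t : ℝ),
      let v : ℤ → ℝ → ℝ := fun m s => u m s / (1 - lam * u m s)
      v (n + 1) t ≠ v (n - 1) t ∧
        deriv (v n) t =
          (v n t) ^ 2 * v (n + 1) t * v (n - 1) t / (v (n + 1) t - v (n - 1) t) := by
  intro n t v
  obtain ⟨hne, hder⟩ := hsol n t
  have h0 := hlam n t
  have h1 := hlam (n + 1) t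
  have h2 := hlam (n - 1) t
  -- v difference nonzero
  have hvd : v (n + 1) t - v (n - 1) t =
      (u (n + 1) t - u (n - 1) t) / ((1 - lam * u (n + 1) t) * (1 - lam * u (n - 1) t)) := by
    simp only [v]
    rw [div_sub_div _ _ h1 h2]
    ring
  have hvne : v (n + 1) t ≠ v (n - 1) t := by
    intro h
    apply sub_ne_zero.mpr hne
    have : v (n + 1) t - v (n - 1) t = 0 := sub_eq_zero.mpr h
    rw [hvd, div_eq_zero_iff] at this
    rcases this with h' | h'
    · exact h'
    · exact absurd h' (mul_ne_zero h1 h2)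
  refine ⟨hvne, ?_⟩
  -- derivative of v n
  have hd : HasDerivAt (v n) (deriv (u n) t / (1 - lam * u n t) ^ 2) t := by
    have hu' : HasDerivAt (u n) (deriv (u n) t) t := ((hu n) t).hasDerivAt
    have hden : HasDerivAt (fun s => 1 - lam * u n s) (-(lam * deriv (u n) t)) t := by
      simpa using ((hu'.const_mul lam).const_sub 1)
    have := hu'.div hden h0
    refine this.congr_deriv ?_
    ring
  rw [hd.deriv, hder]
  have hu2 : u (n + 1) t - u (n - 1) t ≠ 0 := sub_ne_zero.mpr hne
  have hv2 : v (n + 1) t - v (n - 1) t ≠ 0 := sub_ne_zero.mpr hvne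
  rw [hvd] at hv2 ⊢
  simp only [v]
  rw [eq_div_iff hv2]
  field_simp
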